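/- Let p be a positive integer, c > 0 a real number, and s₁, s₂ complex numbers with Re(s₁) > 0, Re(s₂) > 0, and set α = -(s₁+s₂). Then ∫₀¹ (y^p + c)^α y^(p s₁ - 1) dy + ∫₀¹ (1 + c x^p)^α x^(p s₂ - 1) dx = (c^(-s₂)/p) · B(s₁, s₂), where B is the Euler beta function. -/

import Mathlib

open MeasureTheory Set Complex

private lemma aux_inv {x : ℝ} (hx : 0 < x) (w : ℂ) :
    ((x⁻¹ : ℝ) : ℂ) ^ w = (x : ℂ) ^ (-w) := by
  rw [Complex.ofReal_inv, Complex.inv_cpow, Complex.cpow_neg]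
  rw [Complex.arg_ofReal_of_nonneg hx.le]
  exact Real.pi_ne_zero.symm

private lemma aux_pow {x : ℝ} (hx : 0 < x) (n : ℕ) (w : ℂ) :
    ((x ^ n : ℝ) : ℂ) ^ w = (x : ℂ) ^ ((n : ℂ) * w) := by
  have him : (Complex.log (x:ℂ) * (n:ℂ)).im = 0 := by
    rw [← Complex.ofReal_log hx.le, ← Complex.ofReal_natCast, ← Complex.ofReal_mul]
    simp
  rw [Complex.cpow_mul _ (by rw [him]; exact neg_neg_iff_pos.mpr Real.pi_pos)
    (by rw [him]; exact Real.pi_pos.le), Complex.cpow_natCast, Complex.ofReal_pow]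

private lemma aux_pt1 {x : ℝ} (hx0 : 0 < x) (hx1 : x < 1) (s₁ s₂ : ℂ) :
    |((1-x)^2)⁻¹| • (((1 + x/(1-x) : ℝ):ℂ) ^ (-(s₁+s₂)) * ((x/(1-x) : ℝ):ℂ) ^ (s₁-1))
      = (x:ℂ)^(s₁-1) * (1 - (x:ℂ))^(s₂-1) := by
  have h1x : (0:ℝ) < 1 - x := by linarith
  have hz : (1 - (x:ℂ)) ≠ 0 := by
    intro h
    have : ((1 - x : ℝ) : ℂ) = 0 := by push_cast; exact h
    exact h1x.ne' (by exact_mod_cast this)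
  have e1 : (1 + x/(1-x):ℝ) = (1-x)⁻¹ := by field_simp; ring
  have e2 : (x/(1-x):ℝ) = x * (1-x)⁻¹ := div_eq_mul_inv _ _
  rw [e1, e2, aux_inv h1x, Complex.ofReal_mul,
    mul_cpow_ofReal_nonneg hx0.le (inv_nonneg.mpr h1x.le), aux_inv h1x,
    abs_of_pos (by positivity), Complex.real_smul, neg_neg]
  push_cast
  have h2 : ((1 - (x:ℂ))^2)⁻¹ = (1-(x:ℂ))^(-2:ℂ) := by
    rw [show ((-2:ℂ)) = -(2:ℂ) by norm_num, Complex.cpow_neg, Complex.cpow_two]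
  rw [h2]
  have hzc : (1-(x:ℂ))^(-2:ℂ) * ((1-(x:ℂ))^(s₁+s₂) * (1-(x:ℂ))^(-(s₁-1)))
      = (1-(x:ℂ))^(s₂-1) := by
    rw [← Complex.cpow_add _ _ hz, ← Complex.cpow_add _ _ hz]; congr 1; ring
  calc (1-(x:ℂ))^(-2:ℂ) * ((1-(x:ℂ))^(s₁+s₂) * ((x:ℂ)^(s₁-1) * (1-(x:ℂ))^(-(s₁-1))))
      = (x:ℂ)^(s₁-1) * ((1-(x:ℂ))^(-2:ℂ) * ((1-(x:ℂ))^(s₁+s₂) * (1-(x:ℂ))^(-(s₁-1)))) := by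
        ring
    _ = (x:ℂ)^(s₁-1) * (1-(x:ℂ))^(s₂-1) := by rw [hzc]

private lemma beta_Ioi {s₁ s₂ : ℂ} (h1 : 0 < s₁.re) (h2 : 0 < s₂.re) :
    IntegrableOn (fun t : ℝ => ((1 + t : ℝ) : ℂ) ^ (-(s₁+s₂)) * (t : ℂ) ^ (s₁ - 1)) (Ioi 0) ∧
    ∫ t in Ioi (0:ℝ), ((1 + t : ℝ) : ℂ) ^ (-(s₁+s₂)) * (t : ℂ) ^ (s₁ - 1)
      = Complex.betaIntegral s₁ s₂ := by
  set g : ℝ → ℂ := fun t => ((1 + t : ℝ) : ℂ) ^ (-(s₁+s₂)) * (t : ℂ) ^ (s₁ - 1) with hg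
  set f : ℝ → ℝ := fun x => x / (1 - x) with hf
  set f' : ℝ → ℝ := fun x => ((1-x)^2)⁻¹ with hf'
  have hderiv : ∀ x ∈ Ioo (0:ℝ) 1, HasDerivWithinAt f (f' x) (Ioo 0 1) x := by
    intro x hx
    have h1x : (1:ℝ) - x ≠ 0 := by rw [Set.mem_Ioo] at hx; intro h; linarith [hx.2]
    have := (hasDerivAt_id x).div ((hasDerivAt_const x (1:ℝ)).sub (hasDerivAt_id x)) h1x
    refine (this.congr_deriv ?_).hasDerivWithinAt
    simp only [hf', id, Pi.sub_apply]
    field_simp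
    ring
  have hinj : InjOn f (Ioo 0 1) := by
    intro a ha b hb h
    rw [Set.mem_Ioo] at ha hb
    have ha1 : (1:ℝ) - a ≠ 0 := by intro hh; linarith [ha.2]
    have hb1 : (1:ℝ) - b ≠ 0 := by intro hh; linarith [hb.2]
    have := (div_eq_div_iff ha1 hb1).mp h
    nlinarith
  have himg : f '' Ioo 0 1 = Ioi 0 := by
    ext y
    simp only [Set.mem_image, Set.mem_Ioo, Set.mem_Ioi]
    constructor
    · rintro ⟨x, ⟨hx0, hx1⟩, rfl⟩
      exact div_pos hx0 (by linarith)
    · intro hy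
      refine ⟨y / (1 + y), ⟨div_pos hy (by linarith), ?_⟩, ?_⟩
      · rw [div_lt_one (by linarith)]; linarith
      · rw [hf]; field_simp; ring
  have key := integral_image_eq_integral_abs_deriv_smul measurableSet_Ioo hderiv hinj g
  have keyInt := integrableOn_image_iff_integrableOn_abs_deriv_smul measurableSet_Ioo hderiv hinj g
  rw [himg] at key keyInt
  have hpt : EqOn (fun x => |f' x| • g (f x))
      (fun x : ℝ => (x:ℂ)^(s₁-1) * (1 - (x:ℂ))^(s₂-1)) (Ioo 0 1) := by
    intro x hx
    rw [Set.mem_Ioo] at hx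
    exact aux_pt1 hx.1 hx.2 s₁ s₂
  have hbetaInt : IntegrableOn (fun x : ℝ => (x:ℂ)^(s₁-1) * (1 - (x:ℂ))^(s₂-1)) (Ioo 0 1) := by
    have := (intervalIntegrable_iff_integrableOn_Ioc_of_le (by norm_num : (0:ℝ) ≤ 1)).mp
      (Complex.betaIntegral_convergent h1 h2)
    exact this.mono_set Set.Ioo_subset_Ioc_self
  constructor
  · rw [keyInt]
    exact (hbetaInt.congr_fun (fun x hx => (hpt hx).symm) measurableSet_Ioo)
  · rw [key, setIntegral_congr_fun measurableSet_Ioo hpt, Complex.betaIntegral,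
      intervalIntegral.integral_of_le (by norm_num : (0:ℝ) ≤ 1),
      integral_Ioc_eq_integral_Ioo]

private lemma scaled_Ioi {s₁ s₂ : ℂ} (h1 : 0 < s₁.re) (h2 : 0 < s₂.re) {c : ℝ} (hc : 0 < c) :
    IntegrableOn (fun t : ℝ => ((t + c : ℝ) : ℂ) ^ (-(s₁+s₂)) * (t : ℂ) ^ (s₁ - 1)) (Ioi 0) ∧
    ∫ t in Ioi (0:ℝ), ((t + c : ℝ) : ℂ) ^ (-(s₁+s₂)) * (t : ℂ) ^ (s₁ - 1)
      = (c:ℂ) ^ (-s₂) * Complex.betaIntegral s₁ s₂ := by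
  set G : ℝ → ℂ := fun t => ((t + c : ℝ) : ℂ) ^ (-(s₁+s₂)) * (t : ℂ) ^ (s₁ - 1) with hG
  have hc0 : (c:ℂ) ≠ 0 := by exact_mod_cast hc.ne'
  have hderiv : ∀ x ∈ Ioi (0:ℝ), HasDerivWithinAt (fun y => c * y) c (Ioi 0) x := by
    intro x _
    simpa using ((hasDerivAt_id x).const_mul c).hasDerivWithinAt
  have hinj : InjOn (fun y => c * y) (Ioi (0:ℝ)) := fun a _ b _ h => mul_left_cancel₀ hc.ne' h
  have himg := Set.image_const_mul_Ioi_zero hc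
  have key := integral_image_eq_integral_abs_deriv_smul measurableSet_Ioi hderiv hinj G
  have keyInt := integrableOn_image_iff_integrableOn_abs_deriv_smul measurableSet_Ioi hderiv hinj G
  rw [himg] at key keyInt
  have hcc : (c:ℂ)^(-(s₁+s₂)) * (c:ℂ)^(s₁-1) * (c:ℂ) = (c:ℂ)^(-s₂) := by
    nth_rewrite 3 [← Complex.cpow_one (c:ℂ)]
    rw [← Complex.cpow_add _ _ hc0, ← Complex.cpow_add _ _ hc0]
    congr 1; ring
  have hpt : EqOn (fun x : ℝ => |c| • G (c * x))
      (fun x : ℝ => (c:ℂ)^(-s₂) * (((1 + x : ℝ) : ℂ) ^ (-(s₁+s₂)) * (x : ℂ) ^ (s₁ - 1)))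
      (Ioi 0) := by
    intro x hx
    rw [Set.mem_Ioi] at hx
    simp only [hG]
    have e : (c*x + c : ℝ) = c * (1+x) := by ring
    rw [abs_of_pos hc, Complex.real_smul, e, Complex.ofReal_mul,
      mul_cpow_ofReal_nonneg hc.le (by linarith), Complex.ofReal_mul,
      mul_cpow_ofReal_nonneg hc.le hx.le]
    calc (c:ℂ) * ((c:ℂ)^(-(s₁+s₂)) * ((1+x:ℝ):ℂ)^(-(s₁+s₂)) *
            ((c:ℂ)^(s₁-1) * (x:ℂ)^(s₁-1)))
        = ((c:ℂ)^(-(s₁+s₂)) * (c:ℂ)^(s₁-1) * (c:ℂ)) *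
            (((1+x:ℝ):ℂ)^(-(s₁+s₂)) * (x:ℂ)^(s₁-1)) := by ring
      _ = (c:ℂ)^(-s₂) * (((1+x:ℝ):ℂ)^(-(s₁+s₂)) * (x:ℂ)^(s₁-1)) := by rw [hcc]
  obtain ⟨hInt1, hEq1⟩ := beta_Ioi h1 h2
  constructor
  · rw [keyInt]
    exact IntegrableOn.congr_fun (hInt1.const_mul ((c:ℂ)^(-s₂)))
      (fun x hx => (hpt hx).symm) measurableSet_Ioi
  · rw [key, setIntegral_congr_fun measurableSet_Ioi hpt, integral_const_mul, hEq1]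

private lemma inv_Ioi {s₁ s₂ : ℂ} {c : ℝ} (hc : 0 < c) :
    ∫ t in Ioi (1:ℝ), ((t + c : ℝ) : ℂ) ^ (-(s₁+s₂)) * (t : ℂ) ^ (s₁ - 1)
      = ∫ x in Ioc (0:ℝ) 1, ((1 + c * x : ℝ) : ℂ) ^ (-(s₁+s₂)) * (x : ℂ) ^ (s₂ - 1) := by
  set G : ℝ → ℂ := fun t => ((t + c : ℝ) : ℂ) ^ (-(s₁+s₂)) * (t : ℂ) ^ (s₁ - 1) with hG
  have himg : (fun x : ℝ => x⁻¹) '' Ioc 0 1 = Ici 1 := by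
    ext y
    simp only [Set.mem_image, Set.mem_Ioc, Set.mem_Ici]
    constructor
    · rintro ⟨x, ⟨hx0, hx1⟩, rfl⟩
      exact (one_le_inv₀ hx0).mpr hx1
    · intro hy
      have hy0 : (0:ℝ) < y := by linarith
      exact ⟨y⁻¹, ⟨inv_pos.mpr hy0, inv_le_one_of_one_le₀ hy⟩, inv_inv y⟩
  have hderiv : ∀ x ∈ Ioc (0:ℝ) 1, HasDerivWithinAt (fun x : ℝ => x⁻¹) (-(x^2)⁻¹) (Ioc 0 1) x :=
    fun x hx => (hasDerivAt_inv hx.1.ne').hasDerivWithinAt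
  have hinj : InjOn (fun x : ℝ => x⁻¹) (Ioc 0 1) := fun a _ b _ h => inv_injective h
  have key := integral_image_eq_integral_abs_deriv_smul measurableSet_Ioc hderiv hinj G
  rw [himg] at key
  rw [← integral_Ici_eq_integral_Ioi, key]
  apply setIntegral_congr_fun measurableSet_Ioc
  intro x hx
  have hx0 : (0:ℝ) < x := hx.1
  have hxz : (x:ℂ) ≠ 0 := by exact_mod_cast hx0.ne'
  simp only [hG]
  have e : (x⁻¹ + c : ℝ) = (1 + c*x) * x⁻¹ := by field_simp
  have habs : |-(x^2)⁻¹| = (x^2)⁻¹ := by rw [abs_neg, abs_of_pos (by positivity)]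
  rw [habs, Complex.real_smul, e, Complex.ofReal_mul,
    mul_cpow_ofReal_nonneg (by positivity) (inv_nonneg.mpr hx0.le),
    aux_inv hx0, aux_inv hx0]
  have h2 : (((x^2)⁻¹ : ℝ):ℂ) = (x:ℂ)^(-2:ℂ) := by
    rw [show ((-2:ℂ)) = -(2:ℂ) by norm_num, Complex.cpow_neg, Complex.cpow_two]
    push_cast
    ring
  rw [h2]
  have hxc : (x:ℂ)^(-2:ℂ) * ((x:ℂ)^(-(-(s₁+s₂))) * (x:ℂ)^(-(s₁-1))) = (x:ℂ)^(s₂-1) := by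
    rw [← Complex.cpow_add _ _ hxz, ← Complex.cpow_add _ _ hxz]
    congr 1; ring
  calc (x:ℂ)^(-2:ℂ) * (((1+c*x:ℝ):ℂ)^(-(s₁+s₂)) * (x:ℂ)^(-(-(s₁+s₂))) * (x:ℂ)^(-(s₁-1)))
      = ((1+c*x:ℝ):ℂ)^(-(s₁+s₂)) * ((x:ℂ)^(-2:ℂ) * ((x:ℂ)^(-(-(s₁+s₂))) * (x:ℂ)^(-(s₁-1)))) := by
        ring
    _ = ((1+c*x:ℝ):ℂ)^(-(s₁+s₂)) * (x:ℂ)^(s₂-1) := by rw [hxc]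

private lemma pow_subst (p : ℕ) (hp : 0 < p) (g : ℝ → ℂ) :
    ∫ t in Ioc (0:ℝ) 1, g t = ∫ y in Ioc (0:ℝ) 1, |(p:ℝ) * y^(p-1)| • g (y^p) := by
  have himg : (fun y : ℝ => y ^ p) '' Ioc 0 1 = Ioc 0 1 := by
    ext z
    simp only [Set.mem_image, Set.mem_Ioc]
    constructor
    · rintro ⟨y, ⟨hy0, hy1⟩, rfl⟩
      exact ⟨pow_pos hy0 p, pow_le_one₀ hy0.le hy1⟩
    · rintro ⟨hz0, hz1⟩
      refine ⟨z ^ ((p:ℝ)⁻¹), ⟨Real.rpow_pos_of_pos hz0 _, Real.rpow_le_one hz0.le hz1 (by positivity)⟩, ?_⟩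
      rw [← Real.rpow_natCast (z ^ ((p:ℝ)⁻¹)) p, ← Real.rpow_mul hz0.le,
        inv_mul_cancel₀ (by exact_mod_cast hp.ne' : (p:ℝ) ≠ 0), Real.rpow_one]
  have hderiv : ∀ x ∈ Ioc (0:ℝ) 1, HasDerivWithinAt (fun y : ℝ => y^p) ((p:ℝ)*x^(p-1)) (Ioc 0 1) x :=
    fun x _ => (hasDerivAt_pow p x).hasDerivWithinAt
  have hinj : InjOn (fun y : ℝ => y^p) (Ioc 0 1) :=
    (pow_left_strictMonoOn₀ hp.ne').injOn.mono (fun x hx => hx.1.le)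
  conv_lhs => rw [← himg]
  exact integral_image_eq_integral_abs_deriv_smul measurableSet_Ioc hderiv hinj g

private lemma aux_ptp {y : ℝ} (hy : 0 < y) {p : ℕ} (hp : 0 < p) (w : ℂ) (B : ℂ) :
    |(p:ℝ) * y^(p-1)| • (B * ((y^p : ℝ):ℂ)^(w-1)) = (p:ℂ) * (B * (y:ℂ)^((p:ℂ)*w - 1)) := by
  have hyz : (y:ℂ) ≠ 0 := by exact_mod_cast hy.ne'
  have hppos : (0:ℝ) < (p:ℝ) * y^(p-1) := by positivity
  rw [abs_of_pos hppos, Complex.real_smul, aux_pow hy p (w-1)]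
  push_cast
  rw [← Complex.cpow_natCast (y:ℂ) (p-1)]
  have hyc : (y:ℂ)^(((p-1:ℕ)):ℂ) * (y:ℂ)^((p:ℂ)*(w-1)) = (y:ℂ)^((p:ℂ)*w - 1) := by
    rw [← Complex.cpow_add _ _ hyz]
    congr 1
    push_cast [Nat.cast_sub hp]
    ring
  calc (p:ℂ) * (y:ℂ)^(((p-1:ℕ)):ℂ) * (B * (y:ℂ)^((p:ℂ)*(w-1)))
      = (p:ℂ) * (B * ((y:ℂ)^(((p-1:ℕ)):ℂ) * (y:ℂ)^((p:ℂ)*(w-1)))) := by ring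
    _ = (p:ℂ) * (B * (y:ℂ)^((p:ℂ)*w - 1)) := by rw [hyc]

theorem stmt3 (p : ℕ) (hp : 0 < p) (c : ℝ) (hc : 0 < c) (s₁ s₂ : ℂ)
    (h1 : 0 < s₁.re) (h2 : 0 < s₂.re) (α : ℂ) (hα : α = -(s₁ + s₂)) :
    (∫ y in Set.Ioc (0:ℝ) 1, ((y ^ p + c : ℝ) : ℂ) ^ α * (y : ℂ) ^ ((p : ℂ) * s₁ - 1)) +
      (∫ x in Set.Ioc (0:ℝ) 1, ((1 + c * x ^ p : ℝ) : ℂ) ^ α * (x : ℂ) ^ ((p : ℂ) * s₂ - 1)) =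
    (c : ℂ) ^ (-s₂) / (p : ℂ) *
      (Complex.Gamma s₁ * Complex.Gamma s₂ / Complex.Gamma (s₁ + s₂)) := by
  subst hα
  have hp0 : ((p:ℂ)) ≠ 0 := by exact_mod_cast hp.ne'
  obtain ⟨hIntG, hEqG⟩ := scaled_Ioi h1 h2 hc
  set G : ℝ → ℂ := fun t => ((t + c : ℝ) : ℂ) ^ (-(s₁+s₂)) * (t : ℂ) ^ (s₁ - 1) with hG
  set H : ℝ → ℂ := fun x => ((1 + c * x : ℝ) : ℂ) ^ (-(s₁+s₂)) * (x : ℂ) ^ (s₂ - 1) with hH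
  have hsplit : ∫ t in Ioi (0:ℝ), G t = (∫ t in Ioc (0:ℝ) 1, G t) + ∫ t in Ioi (1:ℝ), G t := by
    rw [← Set.Ioc_union_Ioi_eq_Ioi (by norm_num : (0:ℝ) ≤ 1)]
    exact setIntegral_union (Set.Ioc_disjoint_Ioi le_rfl) measurableSet_Ioi
      (hIntG.mono_set Set.Ioc_subset_Ioi_self)
      (hIntG.mono_set (Set.Ioi_subset_Ioi (by norm_num)))
  have e1 : ∫ t in Ioc (0:ℝ) 1, G t
      = (p:ℂ) * ∫ y in Set.Ioc (0:ℝ) 1,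
          ((y ^ p + c : ℝ) : ℂ) ^ (-(s₁+s₂)) * (y : ℂ) ^ ((p : ℂ) * s₁ - 1) := by
    rw [pow_subst p hp G]
    calc ∫ y in Ioc (0:ℝ) 1, |(p:ℝ)*y^(p-1)| • G (y^p)
        = ∫ y in Ioc (0:ℝ) 1,
            (p:ℂ) * (((y ^ p + c : ℝ) : ℂ) ^ (-(s₁+s₂)) * (y : ℂ) ^ ((p : ℂ) * s₁ - 1)) := by
          refine setIntegral_congr_fun measurableSet_Ioc (fun y hy => ?_)
          exact aux_ptp hy.1 hp s₁ _
      _ = _ := integral_const_mul _ _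
  have e2 : ∫ t in Ioc (0:ℝ) 1, H t
      = (p:ℂ) * ∫ x in Set.Ioc (0:ℝ) 1,
          ((1 + c * x ^ p : ℝ) : ℂ) ^ (-(s₁+s₂)) * (x : ℂ) ^ ((p : ℂ) * s₂ - 1) := by
    rw [pow_subst p hp H]
    calc ∫ y in Ioc (0:ℝ) 1, |(p:ℝ)*y^(p-1)| • H (y^p)
        = ∫ y in Ioc (0:ℝ) 1,
            (p:ℂ) * (((1 + c * y ^ p : ℝ) : ℂ) ^ (-(s₁+s₂)) * (y : ℂ) ^ ((p : ℂ) * s₂ - 1)) := by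
          refine setIntegral_congr_fun measurableSet_Ioc (fun y hy => ?_)
          exact aux_ptp hy.1 hp s₂ _
      _ = _ := integral_const_mul _ _
  have hΓ : Complex.Gamma (s₁ + s₂) ≠ 0 :=
    Complex.Gamma_ne_zero_of_re_pos (by rw [Complex.add_re]; linarith)
  have hbeta : Complex.betaIntegral s₁ s₂
      = Complex.Gamma s₁ * Complex.Gamma s₂ / Complex.Gamma (s₁ + s₂) := by
    rw [Complex.Gamma_mul_Gamma_eq_betaIntegral h1 h2]
    field_simp
  have hmain : (p:ℂ) *
      ((∫ y in Set.Ioc (0:ℝ) 1, ((y ^ p + c : ℝ) : ℂ) ^ (-(s₁+s₂)) * (y : ℂ) ^ ((p : ℂ) * s₁ - 1)) +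
       (∫ x in Set.Ioc (0:ℝ) 1, ((1 + c * x ^ p : ℝ) : ℂ) ^ (-(s₁+s₂)) * (x : ℂ) ^ ((p : ℂ) * s₂ - 1)))
      = (c:ℂ) ^ (-s₂) * (Complex.Gamma s₁ * Complex.Gamma s₂ / Complex.Gamma (s₁ + s₂)) := by
    rw [mul_add, ← e1, ← e2, ← inv_Ioi hc, ← hsplit, hEqG, hbeta]
  apply mul_left_cancel₀ hp0
  rw [hmain]
  field_simp
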